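/- Let μ be a real number with -π < μ < 0 and let a be a real number with a > 1/2. Then Γ(a+1) · Σ_{n∈ℤ} (2n+1)²π² / ( (2n+1)²π² + μ² )^{a+1} = Σ_{k=0}^∞ (-1)^k · ( 2·(1 - 2^{-2(a+k)}) · Γ(a+k+1) · π^{-2(a+k)} · ζ(2(a+k)) / k! ) · μ^{2k}, where both series converge absolutely. -/

import Mathlib

set_option maxHeartbeats 1000000

open MeasureTheory Real Set


lemma iter_deriv_cpow (b : ℝ) (n : ℕ) :
    ∀ z : ℂ, 0 < (1 + z).re →
      iteratedDeriv n (fun w : ℂ => (1 + w) ^ (-(b:ℂ))) z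
        = (∏ i ∈ Finset.range n, (-(b:ℂ) - i)) * (1 + z) ^ (-(b:ℂ) - n) := by
  induction n with
  | zero => intro z hz; simp
  | succ n ih =>
    intro z hz
    rw [iteratedDeriv_succ]
    have hU : IsOpen {w : ℂ | 0 < (1 + w).re} :=
      isOpen_lt continuous_const (by continuity)
    have hev : iteratedDeriv n (fun w : ℂ => (1 + w) ^ (-(b:ℂ)))
        =ᶠ[nhds z] fun w => (∏ i ∈ Finset.range n, (-(b:ℂ) - i)) * (1 + w) ^ (-(b:ℂ) - n) := by
      filter_upwards [hU.mem_nhds hz] with w hw using ih w hw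
    rw [hev.deriv_eq]
    have h1 : HasDerivAt (fun w : ℂ => 1 + w) 1 z := (hasDerivAt_id z).const_add 1
    have h2 : HasDerivAt (fun w : ℂ => (1 + w) ^ (-(b:ℂ) - n))
        ((-(b:ℂ) - n) * (1 + z) ^ (-(b:ℂ) - n - 1) * 1) z :=
      h1.cpow_const (Or.inl hz)
    have h3 := (h2.const_mul (∏ i ∈ Finset.range n, (-(b:ℂ) - i))).deriv
    rw [h3, Finset.prod_range_succ]
    push_cast
    rw [show (-(b:ℂ) - ((n:ℂ) + 1)) = -(b:ℂ) - (n:ℂ) - 1 by ring]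
    ring

lemma binom_hasSum (b : ℝ) (x : ℝ) (hx : |x| < 1) :
    HasSum (fun k : ℕ => (-1)^k * (∏ i ∈ Finset.range k, (b+i)) / (Nat.factorial k) * x^k)
      ((1+x) ^ (-b) : ℝ) := by
  have hx1 : -1 < x := neg_lt_of_abs_lt hx
  have hball : (x:ℂ) ∈ Metric.ball (0:ℂ) 1 := by
    simpa [Complex.norm_real] using hx
  have hdiff : DifferentiableOn ℂ (fun w : ℂ => (1 + w) ^ (-(b:ℂ))) (Metric.ball (0:ℂ) 1) := by
    intro z hz
    have hz' : 0 < (1 + z).re := by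
      have h1 : |z.re| < 1 := lt_of_le_of_lt (Complex.abs_re_le_norm z)
        (by simpa using Metric.mem_ball.mp hz)
      have := neg_lt_of_abs_lt h1
      simp only [Complex.add_re, Complex.one_re]
      linarith
    exact (((hasDerivAt_id z).const_add 1).cpow_const (Or.inl hz')).differentiableAt.differentiableWithinAt
  have H := Complex.hasSum_taylorSeries_on_ball hdiff hball
  have hiter : ∀ n : ℕ, iteratedDeriv n (fun w : ℂ => (1 + w) ^ (-(b:ℂ))) 0
      = (((-1)^n * ∏ i ∈ Finset.range n, (b+i) : ℝ) : ℂ) := by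
    intro n
    rw [iter_deriv_cpow b n 0 (by norm_num)]
    push_cast
    rw [add_zero, Complex.one_cpow, mul_one,
      show ((-1:ℂ))^n = ∏ _i ∈ Finset.range n, (-1:ℂ) by simp, ← Finset.prod_mul_distrib]
    exact Finset.prod_congr rfl fun i _ => by ring
  have H2 : HasSum (fun n : ℕ =>
      ((((-1)^n * (∏ i ∈ Finset.range n, (b+i)) / (Nat.factorial n) * x^n : ℝ)) : ℂ))
      (((1+x) ^ (-b) : ℝ) : ℂ) := by
    have hq : ((1:ℂ) + x) ^ (-(b:ℂ)) = (((1+x) ^ (-b) : ℝ) : ℂ) := by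
      rw [show ((1:ℂ) + x) = (((1+x : ℝ)):ℂ) by push_cast; ring,
        Complex.ofReal_cpow (by linarith : (0:ℝ) ≤ 1+x), Complex.ofReal_neg]
    convert H using 2 with n
    · rfl
    · rw [hiter n, sub_zero, smul_eq_mul, smul_eq_mul]
      push_cast
      ring
    · exact hq.symm
  exact Complex.hasSum_ofReal.mp H2

open Real in
lemma Gamma_prod_aux {b : ℝ} (hb : 0 < b) (k : ℕ) :
    Real.Gamma (b + k) = Real.Gamma b * ∏ i ∈ Finset.range k, (b + i) := by
  induction k with
  | zero => simp
  | succ k ih =>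
    have hk : (0:ℝ) ≤ k := Nat.cast_nonneg k
    have h1 : b + ((k:ℕ)+1 : ℕ) = (b + k) + 1 := by push_cast; ring
    rw [h1, Real.Gamma_add_one (by linarith), ih, Finset.prod_range_succ]
    ring

noncomputable def Zr (t : ℝ) : ℝ := ∑' n : ℕ, ((n:ℝ)+1) ^ (-t)

lemma zr_summable {t : ℝ} (ht : 1 < t) : Summable (fun n : ℕ => ((n:ℝ)+1) ^ (-t)) := by
  have h := Real.summable_nat_rpow.mpr (show -t < -1 by linarith)
  have := (summable_nat_add_iff 1).mpr h
  simpa using this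

lemma zr_nonneg (t : ℝ) : 0 ≤ Zr t :=
  tsum_nonneg fun n => Real.rpow_nonneg (by positivity) _

lemma zr_mono {s t : ℝ} (h1 : 1 < s) (hst : s ≤ t) : Zr t ≤ Zr s := by
  refine Summable.tsum_le_tsum (fun n => ?_) (zr_summable (by linarith)) (zr_summable h1)
  exact Real.rpow_le_rpow_of_exponent_le (by push_cast; linarith [Nat.cast_nonneg (α := ℝ) n])
    (by linarith)

lemma hasSum_odd_nat {t : ℝ} (ht : 1 < t) :
    HasSum (fun m : ℕ => (2*(m:ℝ)+1) ^ (-t)) ((1 - (2:ℝ)^(-t)) * Zr t) := by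
  have hS : HasSum (fun n : ℕ => ((n:ℝ)+1) ^ (-t)) (Zr t) := (zr_summable ht).hasSum
  have hodd : HasSum (fun m : ℕ => (((2*m+1:ℕ):ℝ)+1) ^ (-t)) ((2:ℝ)^(-t) * Zr t) := by
    have h2 := hS.mul_left ((2:ℝ)^(-t))
    have he : (fun m : ℕ => (((2*m+1:ℕ):ℝ)+1) ^ (-t))
        = fun m : ℕ => (2:ℝ)^(-t) * (((m:ℝ)+1) ^ (-t)) := by
      funext m
      rw [← Real.mul_rpow (by norm_num) (by positivity)]
      congr 1
      push_cast; ring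
    rw [he]; exact h2
  have hinj : Function.Injective (fun m : ℕ => 2*m) := fun x y h => by dsimp at h; omega
  have heven : Summable (fun m : ℕ => (((2*m:ℕ):ℝ)+1) ^ (-t)) :=
    (zr_summable ht).comp_injective hinj
  have hE := heven.hasSum
  have hEO := HasSum.even_add_odd (f := fun n : ℕ => ((n:ℝ)+1)^(-t)) hE hodd
  have hEq : (∑' m : ℕ, (((2*m:ℕ):ℝ)+1) ^ (-t)) = (1 - (2:ℝ)^(-t)) * Zr t := by
    have h3 := hEO.unique hS
    linear_combination h3
  rw [hEq] at hE
  have he2 : (fun m : ℕ => (((2*m:ℕ):ℝ)+1) ^ (-t)) = fun m : ℕ => (2*(m:ℝ)+1) ^ (-t) := by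
    funext m; congr 1; push_cast; ring
  rwa [he2] at hE

lemma hasSum_odd_int {t : ℝ} (ht : 1 < t) :
    HasSum (fun n : ℤ => |2*(n:ℝ)+1| ^ (-t)) (2*((1 - (2:ℝ)^(-t)) * Zr t)) := by
  have hpos := hasSum_odd_nat ht
  have h1 : HasSum (fun n : ℕ => |2*((n:ℤ):ℝ)+1| ^ (-t)) ((1 - (2:ℝ)^(-t)) * Zr t) := by
    have he : (fun n : ℕ => |2*((n:ℤ):ℝ)+1| ^ (-t)) = fun m : ℕ => (2*(m:ℝ)+1) ^ (-t) := by
      funext m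
      congr 1
      rw [abs_of_pos (by positivity)]
      push_cast; ring
    rw [he]; exact hpos
  have h2 : HasSum (fun n : ℕ => |2*((-(n+1):ℤ):ℝ)+1| ^ (-t)) ((1 - (2:ℝ)^(-t)) * Zr t) := by
    have he : (fun n : ℕ => |2*((-(n+1):ℤ):ℝ)+1| ^ (-t)) = fun m : ℕ => (2*(m:ℝ)+1) ^ (-t) := by
      funext m
      congr 1
      rw [show (2*((-(m+1):ℤ):ℝ)+1) = -(2*(m:ℝ)+1) by push_cast; ring, abs_neg,
        abs_of_pos (by positivity)]
    rw [he]; exact hpos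
  have := HasSum.of_nat_of_neg_add_one (f := fun n : ℤ => |2*(n:ℝ)+1| ^ (-t)) h1 h2
  convert this using 1
  ring

lemma zeta_real {t : ℝ} (ht : 1 < t) : riemannZeta ((t:ℝ):ℂ) = ((Zr t : ℝ) : ℂ) := by
  rw [zeta_eq_tsum_one_div_nat_add_one_cpow (by simpa using ht), Zr, Complex.ofReal_tsum]
  refine tsum_congr fun n => ?_
  have hnn : (0:ℝ) ≤ (n:ℝ)+1 := by positivity
  rw [Real.rpow_neg hnn, Complex.ofReal_inv, Complex.ofReal_cpow hnn]
  push_cast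
  rw [one_div]

lemma ratio_summable {b r : ℝ} (hb : 0 < b) (hr0 : 0 ≤ r) (hr : r < 1) :
    Summable (fun k : ℕ => (∏ i ∈ Finset.range k, (b+i)) / (Nat.factorial k) * r^k) := by
  have hP : ∀ k : ℕ, 0 < (∏ i ∈ Finset.range k, (b+(i:ℝ))) / (Nat.factorial k) := by
    intro k
    apply div_pos
    · exact Finset.prod_pos fun i _ => by positivity
    · exact_mod_cast Nat.factorial_pos k
  rcases eq_or_lt_of_le hr0 with h0 | h0
  · apply summable_of_ne_finset_zero (s := {0})
    intro k hk
    simp only [Finset.mem_singleton] at hk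
    rw [← h0, zero_pow hk, mul_zero]
  · apply summable_of_ratio_test_tendsto_lt_one hr
      (Filter.Eventually.of_forall fun k => by positivity)
    have hratio : ∀ k : ℕ, ‖(∏ i ∈ Finset.range (k+1), (b+(i:ℝ))) / (Nat.factorial (k+1)) * r^(k+1)‖
        / ‖(∏ i ∈ Finset.range k, (b+(i:ℝ))) / (Nat.factorial k) * r^k‖
        = r * ((b+k) / (k+1)) := by
      intro k
      have hf : (0:ℝ) < Nat.factorial k := by exact_mod_cast Nat.factorial_pos k
      rw [Real.norm_eq_abs, Real.norm_eq_abs, abs_of_pos (by positivity),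
        abs_of_pos (by positivity), Finset.prod_range_succ, Nat.factorial_succ]
      have hPk : (0:ℝ) < ∏ i ∈ Finset.range k, (b+(i:ℝ)) :=
        Finset.prod_pos fun i _ => by positivity
      push_cast
      field_simp
      ring
    simp only [hratio]
    have h1 : Filter.Tendsto (fun k : ℕ => (b+(k:ℝ)) / ((k:ℝ)+1)) Filter.atTop (nhds 1) := by
      have he : (fun k : ℕ => (b+(k:ℝ)) / ((k:ℝ)+1)) = fun k : ℕ => 1 + (b-1) * (1/((k:ℝ)+1)) := by
        funext k
        have : ((k:ℝ)+1) ≠ 0 := by positivity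
        field_simp
        ring
      rw [he]
      have := tendsto_one_div_add_atTop_nhds_zero_nat.const_mul (b-1)
      simpa using (tendsto_const_nhds (x := (1:ℝ)).add this)
    have := h1.const_mul r
    simpa using this

noncomputable def Pk (a : ℝ) (k : ℕ) : ℝ := ∏ i ∈ Finset.range k, (a+1+(i:ℝ))

noncomputable def ck (μ a : ℝ) (k : ℕ) : ℝ :=
  (-1)^k * (Pk a k / (Nat.factorial k)) * μ^(2*k) * Real.Gamma (a+1)
    * π ^ (-(2*(a+(k:ℝ))))

noncomputable def Fkn (μ a : ℝ) (k : ℕ) (n : ℤ) : ℝ :=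
  ck μ a k * |2*(n:ℝ)+1| ^ (-(2*(a+(k:ℝ))))

lemma sq_one_le (n : ℤ) : (1:ℝ) ≤ (2*(n:ℝ)+1)^2 := by
  have h0 : (2*n+1:ℤ) ≠ 0 := by omega
  have h2 : (1:ℤ) ≤ (2*n+1)^2 := by nlinarith [Int.one_le_abs h0, sq_abs (2*n+1:ℤ), abs_nonneg (2*n+1:ℤ)]
  have : ((1:ℤ):ℝ) ≤ (((2*n+1:ℤ))^2 : ℤ) := by exact_mod_cast h2
  push_cast at this
  convert this using 2 <;> push_cast <;> ring

lemma sq_mul_rpow {u v : ℝ} (hu : 0 ≤ u) (hv : 0 ≤ v) (s : ℝ) :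
    (u^2 * v^2) ^ s = u ^ (2*s) * v ^ (2*s) := by
  rw [Real.mul_rpow (sq_nonneg u) (sq_nonneg v),
    ← Real.rpow_natCast u 2, ← Real.rpow_natCast v 2,
    ← Real.rpow_mul hu, ← Real.rpow_mul hv]
  norm_num

lemma R1 {μ a : ℝ} (hπμ : μ^2 < π^2) (ha : a > 1/2) (n : ℤ) :
    HasSum (fun k => Fkn μ a k n)
      (Real.Gamma (a+1) *
        ((2*(n:ℝ)+1)^2*π^2 / ((2*(n:ℝ)+1)^2*π^2 + μ^2) ^ (a+1))) := by
  have hπ : (0:ℝ) < π := Real.pi_pos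
  set A : ℝ := (2*(n:ℝ)+1)^2*π^2 with hAdef
  have hApos : 0 < A := by nlinarith [sq_one_le n]
  have hπA : π^2 ≤ A := by nlinarith [sq_one_le n]
  have hx : |μ^2 / A| < 1 := by
    rw [abs_of_nonneg (by positivity), div_lt_one hApos]
    linarith
  have hbin := (binom_hasSum (a+1) (μ^2/A) hx).mul_right
    (Real.Gamma (a+1) * A ^ (-a))
  have hterm : ∀ k : ℕ, ((-1:ℝ)^k * (∏ i ∈ Finset.range k, (a+1+(i:ℝ))) / (Nat.factorial k)
      * (μ^2/A)^k) * (Real.Gamma (a+1) * A ^ (-a)) = Fkn μ a k n := by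
    intro k
    rw [Fkn, ck, Pk]
    have h1 : A ^ (-a) * ((A:ℝ)^k)⁻¹ = A ^ (-(a+(k:ℝ))) := by
      rw [← Real.rpow_natCast A k, ← Real.rpow_neg hApos.le,
        ← Real.rpow_add hApos]
      ring_nf
    have h2 : A ^ (-(a+(k:ℝ))) = |2*(n:ℝ)+1| ^ (-(2*(a+(k:ℝ)))) * π ^ (-(2*(a+(k:ℝ)))) := by
      rw [hAdef, show (2*(n:ℝ)+1)^2 = |2*(n:ℝ)+1|^2 by rw [sq_abs],
        sq_mul_rpow (abs_nonneg _) hπ.le]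
      ring_nf
    rw [div_pow,
      show (-1:ℝ)^k * ((∏ i ∈ Finset.range k, (a+1+(i:ℝ))) / (Nat.factorial k)) * μ^(2*k)
        * Real.Gamma (a+1) * π ^ (-(2*(a+(k:ℝ)))) * |2*(n:ℝ)+1| ^ (-(2*(a+(k:ℝ))))
        = (-1:ℝ)^k * ((∏ i ∈ Finset.range k, (a+1+(i:ℝ))) / (Nat.factorial k)) * μ^(2*k)
        * Real.Gamma (a+1) * (|2*(n:ℝ)+1| ^ (-(2*(a+(k:ℝ)))) * π ^ (-(2*(a+(k:ℝ))))) from by ring,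
      ← h2, ← h1, pow_mul]
    have hAk : ((A:ℝ)^k) ≠ 0 := by positivity
    field_simp
  have hsum : ((1 + μ^2/A) ^ (-(a+1)) : ℝ) * (Real.Gamma (a+1) * A ^ (-a))
      = Real.Gamma (a+1) * (A / (A + μ^2) ^ (a+1)) := by
    have hkey : A + μ^2 = A * (1 + μ^2/A) := by field_simp
    have h1x : (0:ℝ) < 1 + μ^2/A := by positivity
    rw [hkey, Real.mul_rpow hApos.le h1x.le]
    rw [Real.rpow_neg h1x.le]
    rw [show A / (A ^ (a+1) * (1+μ^2/A) ^ (a+1)) = (A / A ^ (a+1)) * ((1+μ^2/A) ^ (a+1))⁻¹ by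
      field_simp]
    rw [show A / A ^ (a+1) = A ^ (1 - (a+1)) by
      rw [Real.rpow_sub hApos, Real.rpow_one]]
    rw [show (1 : ℝ) - (a+1) = -a by ring]
    ring
  rw [← hsum]
  exact (funext hterm : _) ▸ hbin

theorem stmt13 (μ a : ℝ) (hμ₁ : -π < μ) (hμ₂ : μ < 0) (ha : a > 1/2) :
    Summable (fun n : ℤ => (2 * (n : ℝ) + 1) ^ 2 * π ^ 2 /
        ((2 * (n : ℝ) + 1) ^ 2 * π ^ 2 + μ ^ 2) ^ (a + 1)) ∧
    Summable (fun k : ℕ =>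
      (((-1 : ℝ) ^ k * (2 * (1 - (2 : ℝ) ^ (-2 * (a + (k : ℝ)))) *
          Real.Gamma (a + (k : ℝ) + 1) * π ^ (-2 * (a + (k : ℝ))) / (Nat.factorial k)) *
          μ ^ (2 * k) : ℝ) : ℂ) * riemannZeta ((2 * (a + (k : ℝ)) : ℝ) : ℂ)) ∧
    ((Real.Gamma (a + 1) *
        ∑' n : ℤ, (2 * (n : ℝ) + 1) ^ 2 * π ^ 2 /
          ((2 * (n : ℝ) + 1) ^ 2 * π ^ 2 + μ ^ 2) ^ (a + 1) : ℝ) : ℂ)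
      = ∑' k : ℕ,
          (((-1 : ℝ) ^ k * (2 * (1 - (2 : ℝ) ^ (-2 * (a + (k : ℝ)))) *
              Real.Gamma (a + (k : ℝ) + 1) * π ^ (-2 * (a + (k : ℝ))) / (Nat.factorial k)) *
              μ ^ (2 * k) : ℝ) : ℂ) * riemannZeta ((2 * (a + (k : ℝ)) : ℝ) : ℂ) := by
  have hπ : (0:ℝ) < π := Real.pi_pos
  have hπμ : μ^2 < π^2 := by nlinarith
  have hΓpos : 0 < Real.Gamma (a+1) := Real.Gamma_pos_of_pos (by linarith)
  have htk : ∀ k : ℕ, 1 < 2*(a+(k:ℝ)) := by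
    intro k; have := Nat.cast_nonneg (α := ℝ) k; linarith
  have h2a : (1:ℝ) < 2*a := by linarith
  -- G values
  set G : ℕ → ℝ := fun k => ck μ a k *
    (2*((1 - (2:ℝ)^(-(2*(a+(k:ℝ))))) * Zr (2*(a+(k:ℝ))))) with hGdef
  have R2 : ∀ k : ℕ, HasSum (fun n : ℤ => Fkn μ a k n) (G k) := by
    intro k
    exact (hasSum_odd_int (htk k)).mul_left (ck μ a k)
  have R1' : ∀ n : ℤ, HasSum (fun k => Fkn μ a k n)
      (Real.Gamma (a+1) * ((2*(n:ℝ)+1)^2*π^2 / ((2*(n:ℝ)+1)^2*π^2 + μ^2) ^ (a+1))) :=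
    fun n => R1 hπμ ha n
  -- |c k| and the bound
  have hPpos : ∀ k : ℕ, 0 < Pk a k := by
    intro k
    refine Finset.prod_pos fun i _ => ?_
    have := Nat.cast_nonneg (α := ℝ) i; linarith
  have hfacpos : ∀ k : ℕ, (0:ℝ) < (Nat.factorial k : ℝ) :=
    fun k => by exact_mod_cast Nat.factorial_pos k
  have habs_c : ∀ k : ℕ, |ck μ a k| = Pk a k / (Nat.factorial k) * μ^(2*k)
      * Real.Gamma (a+1) * π ^ (-(2*(a+(k:ℝ)))) := by
    intro k
    rw [ck, abs_mul, abs_mul, abs_mul, abs_mul, abs_pow, abs_neg, abs_one, one_pow, one_mul]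
    rw [abs_of_pos (div_pos (hPpos k) (hfacpos k)), pow_mul,
      abs_of_nonneg (pow_nonneg (sq_nonneg μ) k),
      abs_of_pos hΓpos, abs_of_nonneg (Real.rpow_nonneg hπ.le _), ← pow_mul]
  have hsplitπ : ∀ k : ℕ, π ^ (-(2*(a+(k:ℝ)))) = π ^ (-(2*a)) * ((π^2)⁻¹)^k := by
    intro k
    rw [show -(2*(a+(k:ℝ))) = -(2*a) + (-2)*(k:ℝ) by ring, Real.rpow_add hπ]
    congr 1
    rw [show ((-2:ℝ))*(k:ℝ) = ((2:ℝ))*(k:ℝ)*(-1) by ring]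
    rw [Real.rpow_mul (by positivity), Real.rpow_neg_one]
    congr 1
    rw [Real.rpow_mul hπ.le, Real.rpow_natCast]
    norm_num
  -- summability on the product
  have hFabs : ∀ k n, |Fkn μ a k n| = |ck μ a k| * |2*(n:ℝ)+1| ^ (-(2*(a+(k:ℝ)))) := by
    intro k n
    rw [Fkn, abs_mul, abs_of_nonneg (Real.rpow_nonneg (abs_nonneg _) _)]
  have hrowsum : ∀ k : ℕ, HasSum (fun n : ℤ => |Fkn μ a k n|)
      (|ck μ a k| * (2*((1 - (2:ℝ)^(-(2*(a+(k:ℝ))))) * Zr (2*(a+(k:ℝ)))))) := by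
    intro k
    have := (hasSum_odd_int (htk k)).mul_left |ck μ a k|
    exact (funext fun n => (hFabs k n).symm : _) ▸ this
  have hzr_bound : ∀ k : ℕ, 2*((1 - (2:ℝ)^(-(2*(a+(k:ℝ))))) * Zr (2*(a+(k:ℝ)))) ≤ 2 * Zr (2*a) := by
    intro k
    have h1 : (0:ℝ) < (2:ℝ)^(-(2*(a+(k:ℝ)))) := by positivity
    have h2 : Zr (2*(a+(k:ℝ))) ≤ Zr (2*a) := by
      apply zr_mono h2a
      have := Nat.cast_nonneg (α := ℝ) k; linarith
    have h3 : 0 ≤ Zr (2*(a+(k:ℝ))) := zr_nonneg _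
    nlinarith
  have hratio : Summable (fun k : ℕ => Pk a k / (Nat.factorial k) * (μ^2/π^2)^k) := by
    have := ratio_summable (b := a+1) (r := μ^2/π^2) (by linarith)
      (by positivity) (by rwa [div_lt_one (by positivity)])
    exact this.congr fun k => by rw [Pk]
  have hone : ∀ k : ℕ, (0:ℝ) ≤ 1 - (2:ℝ)^(-(2*(a+(k:ℝ)))) := by
    intro k
    have h1 : (2:ℝ)^(-(2*(a+(k:ℝ)))) ≤ 1 :=
      Real.rpow_le_one_of_one_le_of_nonpos (by norm_num) (by linarith [htk k])
    linarith
  have hcolsum : Summable (fun k : ℕ =>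
      |ck μ a k| * (2*((1 - (2:ℝ)^(-(2*(a+(k:ℝ))))) * Zr (2*(a+(k:ℝ)))))) := by
    refine Summable.of_nonneg_of_le (fun k => ?_) (fun k => ?_)
      (hratio.mul_left (Real.Gamma (a+1) * π ^ (-(2*a)) * (2 * Zr (2*a))))
    · have := zr_nonneg (2*(a+(k:ℝ)))
      have := hone k
      positivity
    · rw [habs_c k, hsplitπ k]
      have hc2 : Pk a k / (Nat.factorial k) * μ^(2*k) * Real.Gamma (a+1)
          * (π ^ (-(2*a)) * ((π^2)⁻¹)^k)
          = (Real.Gamma (a+1) * π ^ (-(2*a))) * (Pk a k / (Nat.factorial k) * (μ^2/π^2)^k) := by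
        rw [div_pow, pow_mul]
        field_simp
        ring_nf; rw [mul_assoc, ← mul_pow, mul_inv_cancel₀ hπ.ne', one_pow, mul_one]
      rw [hc2]
      have hnn : (0:ℝ) ≤ (Real.Gamma (a+1) * π ^ (-(2*a)))
          * (Pk a k / (Nat.factorial k) * (μ^2/π^2)^k) :=
        mul_nonneg (mul_nonneg hΓpos.le (Real.rpow_nonneg hπ.le _))
          (mul_nonneg (div_pos (hPpos k) (hfacpos k)).le
            (pow_nonneg (div_nonneg (sq_nonneg μ) (sq_nonneg π)) k))
      calc (Real.Gamma (a+1) * π ^ (-(2*a))) * (Pk a k / (Nat.factorial k) * (μ^2/π^2)^k)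
          * (2*((1 - (2:ℝ)^(-(2*(a+(k:ℝ))))) * Zr (2*(a+(k:ℝ)))))
          ≤ (Real.Gamma (a+1) * π ^ (-(2*a))) * (Pk a k / (Nat.factorial k) * (μ^2/π^2)^k)
          * (2 * Zr (2*a)) := mul_le_mul_of_nonneg_left (hzr_bound k) hnn
        _ = Real.Gamma (a+1) * π ^ (-(2*a)) * (2 * Zr (2*a))
          * (Pk a k / (Nat.factorial k) * (μ^2/π^2)^k) := by ring
  have hFsummable : Summable (Function.uncurry (Fkn μ a)) := by
    rw [← summable_abs_iff]
    apply (summable_prod_of_nonneg (fun p => abs_nonneg _)).mpr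
    constructor
    · intro k
      exact (hrowsum k).summable
    · apply Summable.of_nonneg_of_le (fun k => tsum_nonneg fun n => abs_nonneg _)
        (fun k => le_of_eq ((hrowsum k).tsum_eq)) hcolsum
  -- Part 1 : Summable T
  have hcol : Summable (fun n : ℤ => ∑' k : ℕ, Fkn μ a k n) := by
    have h := hFsummable.prod_symm.prod
    exact h.congr fun n => rfl
  have hgT : Summable (fun n : ℤ => Real.Gamma (a+1) *
      ((2*(n:ℝ)+1)^2*π^2 / ((2*(n:ℝ)+1)^2*π^2 + μ^2) ^ (a+1))) :=
    hcol.congr fun n => (R1' n).tsum_eq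
  have hT : Summable (fun n : ℤ => (2*(n:ℝ)+1)^2*π^2 / ((2*(n:ℝ)+1)^2*π^2 + μ^2) ^ (a+1)) := by
    have := hgT.mul_left (Real.Gamma (a+1))⁻¹
    exact this.congr fun n => by field_simp
  -- the complex term versus G
  have hGG : ∀ k : ℕ, G k = ((-1 : ℝ) ^ k * (2 * (1 - (2 : ℝ) ^ (-2 * (a + (k : ℝ)))) *
      Real.Gamma (a + (k : ℝ) + 1) * π ^ (-2 * (a + (k : ℝ))) / (Nat.factorial k)) *
      μ ^ (2 * k)) * Zr (2*(a+(k:ℝ))) := by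
    intro k
    simp only [hGdef]
    have hgam : Real.Gamma (a + (k:ℝ) + 1) = Real.Gamma (a+1) * Pk a k := by
      rw [show a + (k:ℝ) + 1 = (a+1) + (k:ℕ) by push_cast; ring,
        Gamma_prod_aux (by linarith) k, Pk]
    rw [hgam, ck, show (-2 * (a + (k:ℝ))) = -(2*(a+(k:ℝ))) by ring]
    field_simp
  have hWG : ∀ k : ℕ, (((-1 : ℝ) ^ k * (2 * (1 - (2 : ℝ) ^ (-2 * (a + (k : ℝ)))) *
      Real.Gamma (a + (k : ℝ) + 1) * π ^ (-2 * (a + (k : ℝ))) / (Nat.factorial k)) *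
      μ ^ (2 * k) : ℝ) : ℂ) * riemannZeta ((2 * (a + (k : ℝ)) : ℝ) : ℂ) = ((G k : ℝ) : ℂ) := by
    intro k
    rw [zeta_real (htk k), ← Complex.ofReal_mul, hGG k]
  have hGsummable : Summable G := by
    have h := hFsummable.prod
    exact (h.congr fun k => (R2 k).tsum_eq)
  -- Part 2
  have hWsummable : Summable (fun k : ℕ =>
      (((-1 : ℝ) ^ k * (2 * (1 - (2 : ℝ) ^ (-2 * (a + (k : ℝ)))) *
          Real.Gamma (a + (k : ℝ) + 1) * π ^ (-2 * (a + (k : ℝ))) / (Nat.factorial k)) *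
          μ ^ (2 * k) : ℝ) : ℂ) * riemannZeta ((2 * (a + (k : ℝ)) : ℝ) : ℂ)) := by
    have : Summable (fun k : ℕ => ((G k : ℝ) : ℂ)) := by
      rw [Complex.summable_ofReal]
      exact hGsummable
    exact this.congr fun k => (hWG k).symm
  refine ⟨hT, hWsummable, ?_⟩
  -- Part 3
  have key : Real.Gamma (a+1) * (∑' n : ℤ, (2*(n:ℝ)+1)^2*π^2 / ((2*(n:ℝ)+1)^2*π^2 + μ^2) ^ (a+1))
      = ∑' k : ℕ, G k := by
    calc Real.Gamma (a+1) * (∑' n : ℤ, (2*(n:ℝ)+1)^2*π^2 / ((2*(n:ℝ)+1)^2*π^2 + μ^2) ^ (a+1))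
        = ∑' n : ℤ, Real.Gamma (a+1) * ((2*(n:ℝ)+1)^2*π^2 / ((2*(n:ℝ)+1)^2*π^2 + μ^2) ^ (a+1)) :=
          (tsum_mul_left).symm
      _ = ∑' n : ℤ, ∑' k : ℕ, Fkn μ a k n := tsum_congr fun n => (R1' n).tsum_eq.symm
      _ = ∑' k : ℕ, ∑' n : ℤ, Fkn μ a k n := Summable.tsum_comm hFsummable
      _ = ∑' k : ℕ, G k := tsum_congr fun k => (R2 k).tsum_eq
  rw [key, Complex.ofReal_tsum]
  exact tsum_congr fun k => (hWG k).symm
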